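/- For n = 3 there exists a finite set F ⊂ ℂ such that for every q ∈ ℂ \ F with q ≠ 0, q ≠ 1 and q ≠ −1, every triple (z_1, z_2, z_3) of complex numbers with z_2² = q, z_1·z_3 = q and z_1 + z_2 + z_3 = 1 + q satisfies (q − z_1)²·(q − z_2)²·(q − z_3)² · ∏_{(i,j), i+j≠4} (q² − z_{4−i}·z_j) ≠ 0, where (i,j) ranges over pairs with 1 ≤ i, j ≤ 3 and i + j ≠ 4. (Equivalently, by the Gram determinant formula, for generic q all four solutions of the system give a nondegenerate Gram matrix of the canonical pairing.) -/
import Mathlib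


open Matrix

/-- for `n = 3` there is a finite set `F ⊂ ℂ` such that for every
`q ∉ F` with `q ≠ 0`, `q ≠ 1`, `q ≠ −1`, every triple `(z₁, z₂, z₃)` with
`z₂² = q`, `z₁·z₃ = q`, `z₁ + z₂ + z₃ = 1 + q` satisfies
`(q − z₁)²·(q − z₂)²·(q − z₃)² · ∏_{(i,j) : i+j ≠ 4} (q² − z_{4−i}·z_j) ≠ 0`,
i.e. for generic `q` all four solutions of the system give a nondegenerate Gram
matrix of the canonical pairing. -/
theorem gram_nondegenerate_n3 :
    ∃ F : Finset ℂ, ∀ q : ℂ, q ∉ F → q ≠ 0 → q ≠ 1 → q ≠ -1 →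
      ∀ z₁ z₂ z₃ : ℂ, z₂ ^ 2 = q → z₁ * z₃ = q → z₁ + z₂ + z₃ = 1 + q →
        (q - z₁) ^ 2 * (q - z₂) ^ 2 * (q - z₃) ^ 2 *
            (∏ p ∈ Finset.univ.filter (fun p : Fin 3 × Fin 3 => p.2 ≠ p.1.rev),
              (q ^ 2 - ![z₁, z₂, z₃] p.1.rev * ![z₁, z₂, z₃] p.2)) ≠ 0 := by
  -- F = complex roots of X⁴ + X³ + X² + X + 1
  set P : Polynomial ℂ :=
    Polynomial.X ^ 4 + Polynomial.X ^ 3 + Polynomial.X ^ 2 + Polynomial.X + 1 with hP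
  have hPne : P ≠ 0 := by
    intro h
    have := congrArg (Polynomial.eval 0) h
    simp [hP] at this
  refine ⟨P.roots.toFinset, ?_⟩
  intro q hqF hq0 hq1 hqm1 z₁ z₂ z₃ h2 h13 hsum
  have hqP : q ^ 4 + q ^ 3 + q ^ 2 + q + 1 ≠ 0 := by
    intro h
    apply hqF
    rw [Multiset.mem_toFinset, Polynomial.mem_roots hPne]
    simp [hP, Polynomial.IsRoot]
    try linear_combination h
  have hprod : (∏ p ∈ Finset.univ.filter (fun p : Fin 3 × Fin 3 => p.2 ≠ p.1.rev),
      (q ^ 2 - ![z₁, z₂, z₃] p.1.rev * ![z₁, z₂, z₃] p.2)) =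
      (q^2 - z₃*z₁)*(q^2 - z₃*z₂)*((q^2 - z₂*z₁)*(q^2 - z₂*z₃))*((q^2 - z₁*z₂)*(q^2 - z₁*z₃)) := by
    rw [Finset.prod_filter, Fintype.prod_prod_type]
    simp [Fin.prod_univ_three, Fin.rev, Fin.ext_iff]
    try ring
  rw [hprod]
  have hz2 : z₂ ≠ 0 := by
    intro h; rw [h] at h2; simp at h2; exact hq0 h2.symm
  -- q − z₂ ≠ 0
  have f1 : q - z₂ ≠ 0 := by
    intro h
    have hz2q : z₂ = q := by linear_combination -h
    rw [hz2q] at h2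
    have : q * (q - 1) = 0 := by linear_combination h2
    rcases mul_eq_zero.1 this with h' | h'
    · exact hq0 h'
    · exact hq1 (by linear_combination h')
  -- (q − z₁)(q − z₃) = q·z₂ ≠ 0
  have f2 : (q - z₁) * (q - z₃) ≠ 0 := by
    have e : (q - z₁) * (q - z₃) = q * z₂ := by
      linear_combination (-q) * hsum + h13
    rw [e]; exact mul_ne_zero hq0 hz2
  -- q² − z₁z₃ = q(q−1) ≠ 0
  have f3 : q ^ 2 - z₁ * z₃ ≠ 0 := by
    have e : q ^ 2 - z₁ * z₃ = q * (q - 1) := by linear_combination -h13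
    rw [e]; exact mul_ne_zero hq0 (sub_ne_zero.2 hq1)
  have f3' : q ^ 2 - z₃ * z₁ ≠ 0 := by rwa [mul_comm z₃ z₁]
  -- (q² − z₂z₁)(q² − z₂z₃) = q²(q² + q + 1 − z₂(1+q)) ≠ 0
  have fkey : q ^ 2 + q + 1 - z₂ * (1 + q) ≠ 0 := by
    intro h
    have hz : z₂ * (1 + q) = q ^ 2 + q + 1 := by linear_combination -h
    have : q ^ 4 + q ^ 3 + q ^ 2 + q + 1 = 0 := by
      linear_combination -(z₂ * (1 + q) + (q ^ 2 + q + 1)) * hz + (1 + q) ^ 2 * h2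
    exact hqP this
  have f4 : (q ^ 2 - z₂ * z₁) * (q ^ 2 - z₂ * z₃) ≠ 0 := by
    have e : (q ^ 2 - z₂ * z₁) * (q ^ 2 - z₂ * z₃) =
        q ^ 2 * (q ^ 2 + q + 1 - z₂ * (1 + q)) := by
      linear_combination (-q ^ 2 * z₂) * hsum + (q ^ 2 + z₁ * z₃) * h2 + q * h13
    rw [e]; exact mul_ne_zero (pow_ne_zero 2 hq0) fkey
  have f4a : q ^ 2 - z₂ * z₁ ≠ 0 := left_ne_zero_of_mul f4
  have f4b : q ^ 2 - z₂ * z₃ ≠ 0 := right_ne_zero_of_mul f4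
  have f5a : q ^ 2 - z₁ * z₂ ≠ 0 := by rwa [mul_comm z₁ z₂]
  have f5b : q ^ 2 - z₃ * z₂ ≠ 0 := by rwa [mul_comm z₃ z₂]
  have hz1 : q - z₁ ≠ 0 := left_ne_zero_of_mul f2
  have hz3 : q - z₃ ≠ 0 := right_ne_zero_of_mul f2
  exact mul_ne_zero (mul_ne_zero (mul_ne_zero (pow_ne_zero 2 hz1) (pow_ne_zero 2 f1))
      (pow_ne_zero 2 hz3))
    (mul_ne_zero (mul_ne_zero (mul_ne_zero f3' f5b) f4) (mul_ne_zero f5a f3))
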